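/- Let σ_1, σ_2 ∈ L_q([0,1]) be spectral functions with σ_1 majorized by σ_2. Then for every Z ∈ L_p([0,1]), ∫₀¹ σ_1(t) F_Z^{-1}(t) dt ≤ ∫₀¹ σ_2(t) F_Z^{-1}(t) dt. -/

import Mathlib

open MeasureTheory Set Filter Topology
open scoped ENNReal

noncomputable section

/-- The standard probability space: the uniform (Lebesgue) probability measure on `[0,1] ⊆ ℝ`. -/
def stdP : Measure ℝ := volume.restrict (Icc (0:ℝ) 1)

/-- Cumulative distribution function of a random variable `Z` on the standard space. -/
def cdf (Z : ℝ → ℝ) (z : ℝ) : ℝ := (stdP {ω | Z ω ≤ z}).toReal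

/-- Right-side quantile function `F_Z^{-1}(τ) = sup{t : F_Z(t) ≤ τ}`. -/
def quant (Z : ℝ → ℝ) (τ : ℝ) : ℝ := sSup {t : ℝ | cdf Z t ≤ τ}

/-- Average Value-at-Risk at level `α`. -/
def avar (Z : ℝ → ℝ) (α : ℝ) : ℝ := (1 - α)⁻¹ * ∫ τ in Ioc α 1, quant Z τ

/-- The scalar product `⟨ζ, Z⟩ = ∫₀¹ ζ(τ) Z(τ) dτ`. -/
def pairing (ζ Z : ℝ → ℝ) : ℝ := ∫ ω, ζ ω * Z ω ∂stdP

/-- Expectation w.r.t. the standard probability space. -/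
def expct (Z : ℝ → ℝ) : ℝ := ∫ ω, Z ω ∂stdP

/-- `μ ∈ 𝔓`: a probability measure supported on `[0,1]` with zero mass at `{1}`. -/
def IsP01 (μ : Measure ℝ) : Prop :=
  IsProbabilityMeasure μ ∧ μ (Icc (0:ℝ) 1)ᶜ = 0 ∧ μ {(1:ℝ)} = 0

/-- cdf of a measure on ℝ. -/
def mcdf (μ : Measure ℝ) (x : ℝ) : ℝ := (μ (Iic x)).toReal

/-- First order stochastic dominance `μ ≼ ν`, i.e. `μ(x) ≥ ν(x)` for all `x`. -/
def FSD (μ ν : Measure ℝ) : Prop := ∀ x : ℝ, mcdf ν x ≤ mcdf μ x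

/-- The map `𝕋`: `(𝕋μ)(τ) = ∫_{[0,τ]} (1-α)⁻¹ dμ(α)`. -/
def Tmap (μ : Measure ℝ) (τ : ℝ) : ℝ := ∫ α in Icc (0:ℝ) τ, (1 - α)⁻¹ ∂μ

/-- Spectral function: nonnegative, nondecreasing, right-continuous on `[0,1)`,
integrating to one. -/
def IsSpectral (σ : ℝ → ℝ) : Prop :=
  (∀ t ∈ Ico (0:ℝ) 1, 0 ≤ σ t) ∧ MonotoneOn σ (Ico (0:ℝ) 1) ∧
  (∀ t ∈ Ico (0:ℝ) 1, ContinuousWithinAt σ (Ici t) t) ∧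
  (∫ t in Ioo (0:ℝ) 1, σ t) = 1

/-- An element of `L_q` is (a.e.) spectral if it has a spectral representative. -/
def IsSpectralAE (σ : ℝ → ℝ) : Prop := ∃ σ₀ : ℝ → ℝ, IsSpectral σ₀ ∧ σ =ᵐ[stdP] σ₀

/-- `∫₀¹ AV@R_α(Z) dμ(α)`. -/
def kusuokaIntegral (μ : Measure ℝ) (Z : ℝ → ℝ) : ℝ := ∫ α, avar Z α ∂μ

/-- `∫₀¹ σ(τ) F_Z^{-1}(τ) dτ`. -/
def spectralIntegral (σ Z : ℝ → ℝ) : ℝ := ∫ t in Ioo (0:ℝ) 1, σ t * quant Z t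

/-- Coherent risk measure on `L_p` of the standard space: monotone, convex,
translation equivariant and positively homogeneous. -/
def IsCoherent (p : ℝ≥0∞) (ρ : (ℝ → ℝ) → ℝ) : Prop :=
  (∀ Z Z' : ℝ → ℝ, MemLp Z p stdP → MemLp Z' p stdP →
      (∀ᵐ ω ∂stdP, Z' ω ≤ Z ω) → ρ Z' ≤ ρ Z) ∧
  (∀ Z Z' : ℝ → ℝ, ∀ t : ℝ, MemLp Z p stdP → MemLp Z' p stdP → t ∈ Icc (0:ℝ) 1 →
      ρ (fun ω => t * Z ω + (1 - t) * Z' ω) ≤ t * ρ Z + (1 - t) * ρ Z') ∧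
  (∀ Z : ℝ → ℝ, ∀ a : ℝ, MemLp Z p stdP → ρ (fun ω => Z ω + a) = ρ Z + a) ∧
  (∀ Z : ℝ → ℝ, ∀ t : ℝ, MemLp Z p stdP → 0 ≤ t → ρ (fun ω => t * Z ω) = t * ρ Z)

/-- Law invariance: distributionally equivalent random variables get the same value. -/
def IsLawInvariant (p : ℝ≥0∞) (ρ : (ℝ → ℝ) → ℝ) : Prop :=
  ∀ Z Z' : ℝ → ℝ, MemLp Z p stdP → MemLp Z' p stdP → cdf Z = cdf Z' → ρ Z = ρ Z'

/-- `𝔐 ⊆ 𝔓` is a Kusuoka set for `ρ` : `ρ(Z) = sup_{μ∈𝔐} ∫₀¹ AV@R_α(Z) dμ(α)`. -/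
def IsKusuokaSet (p : ℝ≥0∞) (ρ : (ℝ → ℝ) → ℝ) (M : Set (Measure ℝ)) : Prop :=
  (∀ μ ∈ M, IsP01 μ) ∧
  ∀ Z : ℝ → ℝ, MemLp Z p stdP →
    IsLUB {x : ℝ | ∃ μ ∈ M, x = kusuokaIntegral μ Z} (ρ Z)

/-- `Υ ⊆ 𝔖` is a generating set for `ρ` : `ρ(Z) = sup_{σ∈Υ} ∫₀¹ σ(τ) F_Z^{-1}(τ) dτ`. -/
def IsGeneratingSet (p : ℝ≥0∞) (ρ : (ℝ → ℝ) → ℝ) (Υ : Set (ℝ → ℝ)) : Prop :=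
  (∀ σ ∈ Υ, IsSpectralAE σ) ∧
  ∀ Z : ℝ → ℝ, MemLp Z p stdP →
    IsLUB {x : ℝ | ∃ σ ∈ Υ, x = spectralIntegral σ Z} (ρ Z)

/-- The dual set `𝔄 = {ζ ∈ Z* : ⟨ζ,Z⟩ ≤ ρ(Z) for all Z ∈ Z}`. -/
def dualSet (p q : ℝ≥0∞) (ρ : (ℝ → ℝ) → ℝ) : Set (ℝ → ℝ) :=
  {ζ : ℝ → ℝ | MemLp ζ q stdP ∧ ∀ Z : ℝ → ℝ, MemLp Z p stdP → pairing ζ Z ≤ ρ Z}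

/-- `Z` exposes `A` at `ζbar`: `ζ ↦ ⟨ζ,Z⟩` attains its maximum over `A`
at the unique (up to a.e. equality) point `ζbar`. -/
def Exposes (A : Set (ℝ → ℝ)) (Z ζbar : ℝ → ℝ) : Prop :=
  ζbar ∈ A ∧ (∀ ζ ∈ A, pairing ζ Z ≤ pairing ζbar Z) ∧
  ∀ ζ ∈ A, pairing ζ Z = pairing ζbar Z → ζ =ᵐ[stdP] ζbar

/-- The set `Exp(A)` of weak* exposed points of `A`. -/
def expPoints (p : ℝ≥0∞) (A : Set (ℝ → ℝ)) : Set (ℝ → ℝ) :=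
  {ζ : ℝ → ℝ | ∃ Z : ℝ → ℝ, MemLp Z p stdP ∧ Exposes A Z ζ}

/-- The weak* topology on (densities of) elements of `Z* = L_q`, induced by the
pairings against elements of `Z = L_p`. -/
def wstarTop (p : ℝ≥0∞) : TopologicalSpace (ℝ → ℝ) :=
  TopologicalSpace.induced
    (fun ζ => fun Z : {Z : ℝ → ℝ // MemLp Z p stdP} => pairing ζ Z.1)
    Pi.topologicalSpace

/-- Weak* closure. -/
def wstarClosure (p : ℝ≥0∞) (S : Set (ℝ → ℝ)) : Set (ℝ → ℝ) :=
  @closure _ (wstarTop p) S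

/-- Weak* closedness. -/
def IsWStarClosed (p : ℝ≥0∞) (S : Set (ℝ → ℝ)) : Prop :=
  @IsClosed _ (wstarTop p) S

/-- The weak topology of measures, induced by integration of bounded continuous functions. -/
def weakTopM : TopologicalSpace (Measure ℝ) :=
  TopologicalSpace.induced
    (fun μ => fun f : BoundedContinuousFunction ℝ ℝ => ∫ x, f x ∂μ)
    Pi.topologicalSpace

/-- Closure in the weak topology of measures. -/
def weakClosureM (M : Set (Measure ℝ)) : Set (Measure ℝ) := @closure _ weakTopM M

/-- Closure within `𝔓` (in the weak topology of measures). -/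
def closureP (M : Set (Measure ℝ)) : Set (Measure ℝ) := weakClosureM M ∩ {μ | IsP01 μ}

/-- Closedness within `𝔓`. -/
def IsClosedInP (M : Set (Measure ℝ)) : Prop := closureP M ⊆ M

/-- The minimal Kusuoka set: a closed Kusuoka set contained in every closed Kusuoka set. -/
def IsMinimalKusuoka (p : ℝ≥0∞) (ρ : (ℝ → ℝ) → ℝ) (M : Set (Measure ℝ)) : Prop :=
  IsKusuokaSet p ρ M ∧ IsClosedInP M ∧
  ∀ M' : Set (Measure ℝ), IsKusuokaSet p ρ M' → IsClosedInP M' → M ⊆ M'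

/-- Measure-preserving transformations of `[0,1]`: bijections of `[0,1]` with
`P(T(A)) = P(A)` for all measurable `A`. -/
def IsMPT (T : ℝ → ℝ) : Prop :=
  Measurable T ∧ BijOn T (Icc (0:ℝ) 1) (Icc (0:ℝ) 1) ∧
  ∀ A : Set ℝ, MeasurableSet A → stdP (T '' A) = stdP A

private instance stdP_isProb : IsProbabilityMeasure stdP := ⟨by simp [stdP, Real.volume_Icc]⟩

private lemma layer_int (b c : ℝ) :
    (∫ s : ℝ, ((Ico c b).indicator (fun _ => (1:ℝ)) s - (Ico b c).indicator (fun _ => (1:ℝ)) s)) = b - c := by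
  rcases le_total c b with h | h
  · rw [Ico_eq_empty (not_lt.mpr h)]
    simp [integral_indicator_const (1:ℝ) measurableSet_Ico, Real.volume_Ico,
      ENNReal.toReal_ofReal (sub_nonneg.mpr h)]
    exact h
  · rw [Ico_eq_empty (not_lt.mpr h)]
    simp [integral_neg, integral_indicator_const (1:ℝ) measurableSet_Ico, Real.volume_Ico,
      ENNReal.toReal_ofReal (sub_nonneg.mpr h), neg_sub]
    rw [max_eq_left (sub_nonneg.mpr h)]; ring

private lemma layer_int_abs (b c : ℝ) :
    (∫ s : ℝ, |((Ico c b).indicator (fun _ => (1:ℝ)) s - (Ico b c).indicator (fun _ => (1:ℝ)) s)|) = |b - c| := by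
  rcases le_total c b with h | h
  · rw [Ico_eq_empty (not_lt.mpr h), abs_of_nonneg (sub_nonneg.mpr h)]
    have : ∀ s, |((Ico c b).indicator (fun _ => (1:ℝ)) s - (∅ : Set ℝ).indicator (fun _ => (1:ℝ)) s)|
        = (Ico c b).indicator (fun _ => (1:ℝ)) s := by
      intro s; simp [abs_of_nonneg (indicator_nonneg (fun _ _ => zero_le_one) s)]
    rw [integral_congr_ae (Eventually.of_forall this)]
    simp [integral_indicator_const (1:ℝ) measurableSet_Ico, Real.volume_Ico,
      ENNReal.toReal_ofReal (sub_nonneg.mpr h)]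
    exact h
  · rw [Ico_eq_empty (not_lt.mpr h), abs_of_nonpos (sub_nonpos.mpr h)]
    have : ∀ s, |((∅ : Set ℝ).indicator (fun _ => (1:ℝ)) s - (Ico b c).indicator (fun _ => (1:ℝ)) s)|
        = (Ico b c).indicator (fun _ => (1:ℝ)) s := by
      intro s; simp [abs_of_nonneg (indicator_nonneg (fun _ _ => zero_le_one) s)]
    rw [integral_congr_ae (Eventually.of_forall this)]
    simp [integral_indicator_const (1:ℝ) measurableSet_Ico, Real.volume_Ico,
      ENNReal.toReal_ofReal (sub_nonneg.mpr h)]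
    exact h

private lemma cdf_mono (Z : ℝ → ℝ) : Monotone (cdf Z) := fun a b hab =>
  ENNReal.toReal_mono (measure_ne_top _ _) (measure_mono (fun ω h => le_trans h hab))

private lemma exists_cdf_le {Z : ℝ → ℝ} (hZ : Measurable Z) {τ : ℝ} (hτ : 0 < τ) :
    ∃ t : ℝ, cdf Z t ≤ τ := by
  have hanti : Antitone (fun n : ℕ => {ω | Z ω ≤ -(n:ℝ)}) := by
    intro m n hmn ω (h : Z ω ≤ -(n:ℝ))
    exact h.trans (neg_le_neg (Nat.cast_le.mpr hmn))
  have hint : (⋂ n : ℕ, {ω | Z ω ≤ -(n:ℝ)}) = ∅ := by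
    ext ω
    simp only [mem_iInter, mem_setOf_eq, mem_empty_iff_false, iff_false, not_forall]
    obtain ⟨n, hn⟩ := exists_nat_gt (-(Z ω))
    exact ⟨n, by push_neg; linarith⟩
  have htd := tendsto_measure_iInter_atTop (μ := stdP) (s := fun n : ℕ => {ω | Z ω ≤ -(n:ℝ)})
    (fun n => (hZ measurableSet_Iic).nullMeasurableSet) hanti ⟨0, measure_ne_top _ _⟩
  rw [hint, measure_empty] at htd
  have hev : ∀ᶠ n : ℕ in atTop, stdP {ω | Z ω ≤ -(n:ℝ)} < ENNReal.ofReal τ :=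
    htd.eventually_lt_const (by simpa using hτ)
  obtain ⟨n, hn⟩ := hev.exists
  exact ⟨-(n:ℝ), ENNReal.toReal_le_of_le_ofReal hτ.le hn.le⟩

private lemma exists_lt_cdf {Z : ℝ → ℝ} {τ : ℝ} (hτ0 : 0 ≤ τ) (hτ : τ < 1) :
    ∃ t : ℝ, τ < cdf Z t := by
  have hmono : Monotone (fun n : ℕ => {ω | Z ω ≤ (n:ℝ)}) := by
    intro m n hmn ω (h : Z ω ≤ (m:ℝ))
    exact h.trans (Nat.cast_le.mpr hmn)
  have hun : (⋃ n : ℕ, {ω | Z ω ≤ (n:ℝ)}) = univ := by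
    ext ω
    simp only [mem_iUnion, mem_setOf_eq, mem_univ, iff_true]
    obtain ⟨n, hn⟩ := exists_nat_gt (Z ω)
    exact ⟨n, hn.le⟩
  have htd := tendsto_measure_iUnion_atTop (μ := stdP) hmono
  rw [hun, measure_univ] at htd
  have hev : ∀ᶠ n : ℕ in atTop, ENNReal.ofReal τ < stdP {ω | Z ω ≤ (n:ℝ)} :=
    htd.eventually_const_lt (ENNReal.ofReal_lt_one.mpr hτ)
  obtain ⟨n, hn⟩ := hev.exists
  refine ⟨(n:ℝ), ?_⟩
  rwa [ENNReal.ofReal_lt_iff_lt_toReal hτ0 (measure_ne_top _ _)] at hn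

private lemma le_cdf_of_forall_lt {Z : ℝ → ℝ} (hZ : Measurable Z) {s τ : ℝ}
    (h : ∀ t, s < t → τ < cdf Z t) : τ ≤ cdf Z s := by
  have hanti : Antitone (fun n : ℕ => {ω | Z ω ≤ s + ((n:ℝ)+1)⁻¹}) := by
    intro m n hmn ω (hω : Z ω ≤ s + ((n:ℝ)+1)⁻¹)
    have h1 : ((n:ℝ)+1)⁻¹ ≤ ((m:ℝ)+1)⁻¹ := by
      apply inv_anti₀ (by positivity)
      have : (m:ℝ) ≤ (n:ℝ) := Nat.cast_le.mpr hmn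
      linarith
    show Z ω ≤ s + ((m:ℝ)+1)⁻¹
    linarith
  have hint : (⋂ n : ℕ, {ω | Z ω ≤ s + ((n:ℝ)+1)⁻¹}) = {ω | Z ω ≤ s} := by
    ext ω
    simp only [mem_iInter, mem_setOf_eq]
    constructor
    · intro hω
      have hlim : Tendsto (fun n : ℕ => s + ((n:ℝ)+1)⁻¹) atTop (𝓝 s) := by
        have := tendsto_one_div_add_atTop_nhds_zero_nat (𝕜 := ℝ)
        simpa [one_div] using tendsto_const_nhds.add this
      exact ge_of_tendsto' hlim hω
    · intro hω n
      have : (0:ℝ) < ((n:ℝ)+1)⁻¹ := by positivity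
      linarith
  have htd := tendsto_measure_iInter_atTop (μ := stdP) (s := fun n : ℕ => {ω | Z ω ≤ s + ((n:ℝ)+1)⁻¹})
    (fun n => (hZ measurableSet_Iic).nullMeasurableSet) hanti ⟨0, measure_ne_top _ _⟩
  rw [hint] at htd
  have h2 : Tendsto (fun n : ℕ => cdf Z (s + ((n:ℝ)+1)⁻¹)) atTop (𝓝 (cdf Z s)) :=
    (ENNReal.tendsto_toReal (measure_ne_top _ _)).comp htd
  refine ge_of_tendsto' h2 (fun n => (h _ ?_).le)
  have : (0:ℝ) < ((n:ℝ)+1)⁻¹ := by positivity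
  linarith

private lemma cdf_nonneg (Z : ℝ → ℝ) (t : ℝ) : 0 ≤ cdf Z t := ENNReal.toReal_nonneg

private lemma cdf_le_one (Z : ℝ → ℝ) (t : ℝ) : cdf Z t ≤ 1 := by
  have h := prob_le_one (μ := stdP) (s := {ω | Z ω ≤ t})
  have := ENNReal.toReal_mono ENNReal.one_ne_top h
  simpa [cdf] using this

private lemma quant_S_nonempty {Z : ℝ → ℝ} (hZ : Measurable Z) {τ : ℝ} (hτ : 0 < τ) :
    {t : ℝ | cdf Z t ≤ τ}.Nonempty := exists_cdf_le hZ hτ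

private lemma quant_S_bddAbove {Z : ℝ → ℝ} {τ : ℝ} (hτ0 : 0 ≤ τ) (hτ : τ < 1) :
    BddAbove {t : ℝ | cdf Z t ≤ τ} := by
  obtain ⟨M, hM⟩ := exists_lt_cdf (Z := Z) hτ0 hτ
  refine ⟨M, fun t ht => le_of_not_gt fun hMt => ?_⟩
  exact absurd ((cdf_mono Z hMt.le).trans ht) (not_le.mpr hM)

private lemma quant_monoOn {Z : ℝ → ℝ} (hZ : Measurable Z) :
    MonotoneOn (quant Z) (Ioo (0:ℝ) 1) := fun a ha b hb hab =>
  csSup_le_csSup (quant_S_bddAbove hb.1.le hb.2) (quant_S_nonempty hZ ha.1)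
    (fun t ht => le_trans ht hab)

private lemma quant_le_of_lt_cdf {Z : ℝ → ℝ} (hZ : Measurable Z) {τ s : ℝ}
    (hτ : τ ∈ Ioo (0:ℝ) 1) (h : τ < cdf Z s) : quant Z τ ≤ s := by
  refine csSup_le (quant_S_nonempty hZ hτ.1) (fun t ht => le_of_not_gt fun hst => ?_)
  exact absurd ((cdf_mono Z hst.le).trans ht) (not_le.mpr h)

private lemma le_cdf_of_quant_le {Z : ℝ → ℝ} (hZ : Measurable Z) {τ s : ℝ}
    (hτ : τ ∈ Ioo (0:ℝ) 1) (h : quant Z τ ≤ s) : τ ≤ cdf Z s := by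
  refine le_cdf_of_forall_lt hZ (fun t hst => ?_)
  by_contra hc; push_neg at hc
  have : t ≤ quant Z τ := le_csSup (quant_S_bddAbove hτ.1.le hτ.2) hc
  linarith

private lemma map_quant {Z : ℝ → ℝ} (hZ : Measurable Z) :
    Measure.map (quant Z) (volume.restrict (Ioo (0:ℝ) 1)) = Measure.map Z stdP := by
  have hgae : AEMeasurable (quant Z) (volume.restrict (Ioo (0:ℝ) 1)) :=
    aemeasurable_restrict_of_monotoneOn measurableSet_Ioo (quant_monoOn hZ)
  haveI : IsFiniteMeasure (volume.restrict (Ioo (0:ℝ) 1)) := ⟨by simp [Real.volume_Ioo]⟩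
  haveI : IsFiniteMeasure (Measure.map (quant Z) (volume.restrict (Ioo (0:ℝ) 1))) :=
    ⟨by rw [Measure.map_apply_of_aemeasurable hgae MeasurableSet.univ]
        exact measure_lt_top _ _⟩
  refine Measure.ext_of_Iic _ _ (fun s => ?_)
  rw [Measure.map_apply_of_aemeasurable hgae measurableSet_Iic,
    Measure.map_apply hZ measurableSet_Iic,
    Measure.restrict_apply' measurableSet_Ioo]
  have hFs1 : cdf Z s ≤ 1 := cdf_le_one Z s
  have sub1 : Ioo 0 (cdf Z s) ⊆ quant Z ⁻¹' Iic s ∩ Ioo 0 1 := by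
    intro τ hτ
    have hτ1 : τ ∈ Ioo (0:ℝ) 1 := ⟨hτ.1, lt_of_lt_of_le hτ.2 hFs1⟩
    exact ⟨quant_le_of_lt_cdf hZ hτ1 hτ.2, hτ1⟩
  have sub2 : quant Z ⁻¹' Iic s ∩ Ioo 0 1 ⊆ Ioc 0 (cdf Z s) := by
    rintro τ ⟨h1, h2⟩
    exact ⟨h2.1, le_cdf_of_quant_le hZ h2 h1⟩
  have hvol : volume (quant Z ⁻¹' Iic s ∩ Ioo 0 1) = ENNReal.ofReal (cdf Z s) := by
    refine le_antisymm ((measure_mono sub2).trans ?_) ?_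
    · rw [Real.volume_Ioc, sub_zero]
    · calc ENNReal.ofReal (cdf Z s) = volume (Ioo 0 (cdf Z s)) := by
            rw [Real.volume_Ioo, sub_zero]
        _ ≤ _ := measure_mono sub1
  rw [hvol]
  exact ENNReal.ofReal_toReal (measure_ne_top stdP _)

private lemma memLp_quant {Z : ℝ → ℝ} (p : ℝ≥0∞) (hZm : Measurable Z) (hZ : MemLp Z p stdP) :
    MemLp (quant Z) p (volume.restrict (Ioo (0:ℝ) 1)) := by
  have hgae : AEMeasurable (quant Z) (volume.restrict (Ioo (0:ℝ) 1)) :=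
    aemeasurable_restrict_of_monotoneOn measurableSet_Ioo (quant_monoOn hZm)
  refine ⟨hgae.aestronglyMeasurable, ?_⟩
  have h1 : eLpNorm (quant Z) p (volume.restrict (Ioo (0:ℝ) 1))
      = eLpNorm (id : ℝ → ℝ) p (Measure.map (quant Z) (volume.restrict (Ioo (0:ℝ) 1))) := by
    rw [eLpNorm_map_measure aestronglyMeasurable_id hgae]; rfl
  rw [h1, map_quant hZm, eLpNorm_map_measure aestronglyMeasurable_id hZm.aemeasurable]
  exact hZ.2

/-- If the spectral function `σ₁ ∈ L_q` is majorized by the spectral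
function `σ₂ ∈ L_q`, then `∫₀¹ σ₁ F_Z^{-1} ≤ ∫₀¹ σ₂ F_Z^{-1}` for every `Z ∈ L_p`. -/
theorem majorization_implies_spectral_le
    (p q : ℝ≥0∞) (hp : 1 ≤ p) (hp' : p ≠ ∞) (hpq : 1 / p + 1 / q = 1)
    (σ1 σ2 : ℝ → ℝ) (hs1 : IsSpectral σ1) (hs2 : IsSpectral σ2)
    (hq1 : MemLp σ1 q stdP) (hq2 : MemLp σ2 q stdP)
    (hmaj1 : ∀ γ ∈ Icc (0:ℝ) 1, (∫ t in Ioo γ 1, σ1 t) ≤ ∫ t in Ioo γ 1, σ2 t)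
    (hmaj2 : (∫ t in Ioo (0:ℝ) 1, σ1 t) = ∫ t in Ioo (0:ℝ) 1, σ2 t)
    (Z : ℝ → ℝ) (hZ : MemLp Z p stdP) :
    spectralIntegral σ1 Z ≤ spectralIntegral σ2 Z := by
  classical
  have hμfin : IsFiniteMeasure (volume.restrict (Ioo (0:ℝ) 1)) := ⟨by simp [Real.volume_Ioo]⟩
  set μ : Measure ℝ := volume.restrict (Ioo (0:ℝ) 1) with hμdef
  -- measurable representative of Z
  have hZae : AEMeasurable Z stdP := hZ.aestronglyMeasurable.aemeasurable
  set Z₀ : ℝ → ℝ := hZae.mk Z with hZ₀def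
  have hZ₀m : Measurable Z₀ := hZae.measurable_mk
  have heq : Z =ᵐ[stdP] Z₀ := hZae.ae_eq_mk
  have hcdf : cdf Z = cdf Z₀ := by
    funext t
    have hset : {ω | Z ω ≤ t} =ᵐ[stdP] {ω | Z₀ ω ≤ t} :=
      heq.mono (fun ω hω => by change (Z ω ≤ t) = (Z₀ ω ≤ t); rw [hω])
    simp only [cdf, measure_congr hset]
  have hquant : quant Z = quant Z₀ := by funext τ; simp only [quant, hcdf]
  have hZ₀p : MemLp Z₀ p stdP := hZ.ae_eq heq
  set g : ℝ → ℝ := quant Z₀ with hgdef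
  have hgmono : MonotoneOn g (Ioo (0:ℝ) 1) := quant_monoOn hZ₀m
  have hgae : AEMeasurable g μ := aemeasurable_restrict_of_monotoneOn measurableSet_Ioo hgmono
  have hgp : MemLp g p μ := memLp_quant p hZ₀m hZ₀p
  -- σ's as MemLp on μ
  have hμs : μ = stdP.restrict (Ioo (0:ℝ) 1) := by
    rw [hμdef, stdP, Measure.restrict_restrict measurableSet_Ioo,
      inter_eq_left.mpr Ioo_subset_Icc_self]
  have hσ1q : MemLp σ1 q μ := by rw [hμs]; exact hq1.restrict _
  have hσ2q : MemLp σ2 q μ := by rw [hμs]; exact hq2.restrict _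
  have hpq' : (1:ℝ≥0∞)/1 = 1/q + 1/p := by
    rw [div_one]; rw [add_comm] at hpq; exact hpq.symm
  have hmul : ∀ σ : ℝ → ℝ, MemLp σ q μ → Integrable (fun t => σ t * g t) μ := by
    intro σ hσ
    have h := (haveI : ENNReal.HolderTriple q p 1 := ⟨by simpa [one_div] using hpq'.symm⟩; hgp.smul hσ : MemLp (σ • g) 1 μ)
    rw [memLp_one_iff_integrable] at h
    exact h
  have hint1 : Integrable (fun t => σ1 t * g t) μ := hmul σ1 hσ1q
  have hint2 : Integrable (fun t => σ2 t * g t) μ := hmul σ2 hσ2q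
  -- σ's integrable
  have hiσ1 : Integrable σ1 μ := by
    by_contra hcon
    have h := hs1.2.2.2
    rw [show (∫ t in Ioo (0:ℝ) 1, σ1 t) = ∫ t, σ1 t ∂μ from rfl, integral_undef hcon] at h
    exact zero_ne_one h
  have hiσ2 : Integrable σ2 μ := by
    by_contra hcon
    have h := hs2.2.2.2
    rw [show (∫ t in Ioo (0:ℝ) 1, σ2 t) = ∫ t, σ2 t ∂μ from rfl, integral_undef hcon] at h
    exact zero_ne_one h
  set δ : ℝ → ℝ := fun t => σ2 t - σ1 t with hδdef
  have hiδ : Integrable δ μ := hiσ2.sub hiσ1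
  have hδint0 : ∫ t, δ t ∂μ = 0 := by
    rw [show (∫ t, δ t ∂μ) = (∫ t, σ2 t ∂μ) - ∫ t, σ1 t ∂μ from integral_sub hiσ2 hiσ1]
    have h2 := hs2.2.2.2; have h1 := hs1.2.2.2
    rw [show (∫ t, σ2 t ∂μ) = ∫ t in Ioo (0:ℝ) 1, σ2 t from rfl,
      show (∫ t, σ1 t ∂μ) = ∫ t in Ioo (0:ℝ) 1, σ1 t from rfl, h1, h2, sub_self]
  have hH : ∀ γ ∈ Icc (0:ℝ) 1, 0 ≤ ∫ t in Ioo γ 1, δ t := by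
    intro γ hγ
    have hsub : Ioo γ 1 ⊆ Ioo (0:ℝ) 1 := Ioo_subset_Ioo hγ.1 le_rfl
    have h1' : IntegrableOn σ1 (Ioo (0:ℝ) 1) volume := hiσ1
    have h2' : IntegrableOn σ2 (Ioo (0:ℝ) 1) volume := hiσ2
    have h1 : IntegrableOn σ1 (Ioo γ 1) volume := h1'.mono_set hsub
    have h2 : IntegrableOn σ2 (Ioo γ 1) volume := h2'.mono_set hsub
    have hm := hmaj1 γ hγ
    rw [show (∫ t in Ioo γ 1, δ t) = (∫ t in Ioo γ 1, σ2 t) - ∫ t in Ioo γ 1, σ1 t from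
      integral_sub h2 h1]
    linarith
  -- reduce goal
  have hsp1 : spectralIntegral σ1 Z = ∫ t, σ1 t * g t ∂μ := by
    simp only [spectralIntegral, hquant]
    rfl
  have hsp2 : spectralIntegral σ2 Z = ∫ t, σ2 t * g t ∂μ := by
    simp only [spectralIntegral, hquant]
    rfl
  rw [hsp1, hsp2]
  have hintδg : Integrable (fun t => δ t * g t) μ :=
    (hint2.sub hint1).congr (Eventually.of_forall fun t => by simp only [Pi.sub_apply]; ring)
  have hsplit : (∫ t, σ2 t * g t ∂μ) - (∫ t, σ1 t * g t ∂μ) = ∫ t, δ t * g t ∂μ := by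
    rw [← integral_sub hint2 hint1]
    exact integral_congr_ae (Eventually.of_forall fun t => by simp only [Pi.sub_apply]; ring)
  suffices h : 0 ≤ ∫ t, δ t * g t ∂μ by linarith
  set c : ℝ := g (1/2 : ℝ) with hcdef
  have hδq : MemLp δ q μ := hσ2q.sub hσ1q
  have hgcp : MemLp (fun t => g t - c) p μ := hgp.sub (memLp_const c)
  have hintc : Integrable (fun t => δ t * (g t - c)) μ := by
    have h := (haveI : ENNReal.HolderTriple q p 1 := ⟨by simpa [one_div] using hpq'.symm⟩; hgcp.smul hδq : MemLp (δ • (fun t => g t - c)) 1 μ)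
    rw [memLp_one_iff_integrable] at h
    exact h
  have hδg_eq : ∫ t, δ t * g t ∂μ = ∫ t, δ t * (g t - c) ∂μ := by
    have hic : Integrable (fun t => δ t * c) μ := hiδ.mul_const c
    have hh : ∫ t, δ t * (g t - c) ∂μ = (∫ t, δ t * g t ∂μ) - ∫ t, δ t * c ∂μ := by
      rw [← integral_sub hintδg hic]
      exact integral_congr_ae (Eventually.of_forall fun t => by ring)
    rw [hh, integral_mul_const, hδint0, zero_mul, sub_zero]
  rw [hδg_eq]
  -- measurable version of g
  set g₀ : ℝ → ℝ := hgae.mk g with hg₀def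
  have hg₀m : Measurable g₀ := hgae.measurable_mk
  have hgg₀ : g =ᵐ[μ] g₀ := hgae.ae_eq_mk
  set K : ℝ → ℝ → ℝ := fun t s => δ t *
    ((Ico c (g₀ t)).indicator (fun _ => (1:ℝ)) s - (Ico (g₀ t) c).indicator (fun _ => (1:ℝ)) s)
    with hKdef
  -- joint measurability
  have hA1 : MeasurableSet {w : ℝ × ℝ | c ≤ w.2 ∧ w.2 < g₀ w.1} :=
    (measurableSet_le measurable_const measurable_snd).inter
      (measurableSet_lt measurable_snd (hg₀m.comp measurable_fst))
  have hA2 : MeasurableSet {w : ℝ × ℝ | g₀ w.1 ≤ w.2 ∧ w.2 < c} :=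
    (measurableSet_le (hg₀m.comp measurable_fst) measurable_snd).inter
      (measurableSet_lt measurable_snd measurable_const)
  have hind1 : ∀ z : ℝ × ℝ, (Ico c (g₀ z.1)).indicator (fun _ => (1:ℝ)) z.2
      = {w : ℝ × ℝ | c ≤ w.2 ∧ w.2 < g₀ w.1}.indicator (fun _ => (1:ℝ)) z := by
    intro z
    by_cases h : c ≤ z.2 ∧ z.2 < g₀ z.1
    · rw [indicator_of_mem (mem_Ico.mpr h),
        indicator_of_mem (show z ∈ {w : ℝ × ℝ | c ≤ w.2 ∧ w.2 < g₀ w.1} from h)]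
    · rw [indicator_of_notMem (fun hh => h (mem_Ico.mp hh)),
        indicator_of_notMem (show z ∉ {w : ℝ × ℝ | c ≤ w.2 ∧ w.2 < g₀ w.1} from h)]
  have hind2 : ∀ z : ℝ × ℝ, (Ico (g₀ z.1) c).indicator (fun _ => (1:ℝ)) z.2
      = {w : ℝ × ℝ | g₀ w.1 ≤ w.2 ∧ w.2 < c}.indicator (fun _ => (1:ℝ)) z := by
    intro z
    by_cases h : g₀ z.1 ≤ z.2 ∧ z.2 < c
    · rw [indicator_of_mem (mem_Ico.mpr h),
        indicator_of_mem (show z ∈ {w : ℝ × ℝ | g₀ w.1 ≤ w.2 ∧ w.2 < c} from h)]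
    · rw [indicator_of_notMem (fun hh => h (mem_Ico.mp hh)),
        indicator_of_notMem (show z ∉ {w : ℝ × ℝ | g₀ w.1 ≤ w.2 ∧ w.2 < c} from h)]
  have hKsm : AEStronglyMeasurable (Function.uncurry K) (μ.prod volume) := by
    have hδsm : AEStronglyMeasurable (fun z : ℝ × ℝ => δ z.1) (μ.prod volume) := hiδ.1.comp_fst
    have hDm : Measurable (fun z : ℝ × ℝ =>
        (Ico c (g₀ z.1)).indicator (fun _ => (1:ℝ)) z.2
          - (Ico (g₀ z.1) c).indicator (fun _ => (1:ℝ)) z.2) := by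
      rw [show (fun z : ℝ × ℝ =>
          (Ico c (g₀ z.1)).indicator (fun _ => (1:ℝ)) z.2
            - (Ico (g₀ z.1) c).indicator (fun _ => (1:ℝ)) z.2)
          = fun z : ℝ × ℝ =>
            {w : ℝ × ℝ | c ≤ w.2 ∧ w.2 < g₀ w.1}.indicator (fun _ => (1:ℝ)) z
              - {w : ℝ × ℝ | g₀ w.1 ≤ w.2 ∧ w.2 < c}.indicator (fun _ => (1:ℝ)) z from
        funext fun z => by rw [hind1 z, hind2 z]]
      exact (measurable_const.indicator hA1).sub (measurable_const.indicator hA2)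
    exact hδsm.mul hDm.aestronglyMeasurable
  have hKval : ∀ t, (∫ s, K t s) = δ t * (g₀ t - c) := by
    intro t
    simp only [hKdef]
    rw [integral_const_mul, layer_int]
  have hKabs : ∀ t, (∫ s, ‖K t s‖) = |δ t| * |g₀ t - c| := by
    intro t
    simp only [hKdef, Real.norm_eq_abs, abs_mul]
    rw [integral_const_mul, layer_int_abs]
  have hKint : ∀ t, Integrable (fun s => K t s) volume := by
    intro t
    simp only [hKdef]
    apply Integrable.const_mul
    exact (((integrableOn_const (s := Ico c (g₀ t)) (C := (1:ℝ)) measure_Ico_lt_top.ne)).integrable_indicator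
        measurableSet_Ico).sub
      (((integrableOn_const (s := Ico (g₀ t) c) (C := (1:ℝ)) measure_Ico_lt_top.ne)).integrable_indicator
        measurableSet_Ico)
  have hKprodInt : Integrable (Function.uncurry K) (μ.prod volume) := by
    rw [integrable_prod_iff hKsm]
    constructor
    · exact Eventually.of_forall (fun t => hKint t)
    · have h0 : Integrable (fun t => δ t * (g₀ t - c)) μ :=
        hintc.congr (hgg₀.mono fun t ht => by show δ t * (g t - c) = δ t * (g₀ t - c); rw [ht])
      have h1 : Integrable (fun t => |δ t| * |g₀ t - c|) μ :=
        h0.abs.congr (Eventually.of_forall fun t => by show |δ t * (g₀ t - c)| = _; rw [abs_mul])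
      exact h1.congr (Eventually.of_forall fun t => (hKabs t).symm)
  have step1 : ∫ t, δ t * (g t - c) ∂μ = ∫ t, (∫ s, K t s) ∂μ := by
    apply integral_congr_ae
    filter_upwards [hgg₀] with t ht
    rw [hKval t, ht]
  have step2 : ∫ t, (∫ s, K t s) ∂μ = ∫ s, (∫ t, K t s ∂μ) :=
    integral_integral_swap hKprodInt
  rw [step1, step2]
  apply integral_nonneg
  intro s
  show (0:ℝ) ≤ ∫ t, K t s ∂μ
  rcases le_or_gt c s with hcs | hsc
  · -- upper case : K t s = indicator {s < g t} δ
    set S : Set ℝ := {t | t ∈ Ioo (0:ℝ) 1 ∧ s < g t} with hSdef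
    set γ : ℝ := if hS : S.Nonempty then sInf S else 1 with hγdef
    have hbdd : BddBelow S := ⟨0, fun t ht => ht.1.1.le⟩
    have hγmem : γ ∈ Icc (0:ℝ) 1 := by
      by_cases hS : S.Nonempty
      · rw [hγdef, dif_pos hS]
        obtain ⟨t₀, ht₀⟩ := hS
        exact ⟨le_csInf ⟨t₀, ht₀⟩ (fun t ht => ht.1.1.le),
          (csInf_le hbdd ht₀).trans ht₀.1.2.le⟩
      · rw [hγdef, dif_neg hS]; exact ⟨zero_le_one, le_rfl⟩
    have hiff : ∀ t ∈ Ioo (0:ℝ) 1, t ≠ γ → (s < g t ↔ t ∈ Ioo γ 1) := by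
      intro t ht htγ
      constructor
      · intro hgt
        have htS : t ∈ S := ⟨ht, hgt⟩
        have hSne : S.Nonempty := ⟨t, htS⟩
        rw [hγdef, dif_pos hSne] at htγ ⊢
        exact ⟨lt_of_le_of_ne (csInf_le hbdd htS) (Ne.symm htγ), ht.2⟩
      · intro htI
        by_cases hS : S.Nonempty
        · rw [hγdef, dif_pos hS] at htI
          obtain ⟨t₀, ht₀S, ht₀t⟩ := exists_lt_of_csInf_lt hS htI.1
          exact lt_of_lt_of_le ht₀S.2 (hgmono ht₀S.1 ht ht₀t.le)
        · rw [hγdef, dif_neg hS] at htI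
          exact absurd (htI.1.trans htI.2) (lt_irrefl _)
    have hae : (fun t => K t s) =ᵐ[μ] (Ioo γ 1).indicator δ := by
      have h1 : ∀ᵐ t ∂μ, t ∈ Ioo (0:ℝ) 1 := ae_restrict_mem measurableSet_Ioo
      have h2 : ∀ᵐ t ∂μ, t ≠ γ := by
        rw [ae_iff]
        have he : {t : ℝ | ¬ t ≠ γ} = {γ} := by ext t; simp
        rw [he, hμdef, Measure.restrict_apply' measurableSet_Ioo]
        exact measure_mono_null inter_subset_left Real.volume_singleton
      filter_upwards [h1, h2, hgg₀] with t ht htγ htg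
      have hif := hiff t ht htγ
      simp only [hKdef]
      by_cases hgt : s < g t
      · rw [indicator_of_mem (hif.mp hgt)]
        have e1 : s ∈ Ico c (g₀ t) := ⟨hcs, htg ▸ hgt⟩
        have e2 : s ∉ Ico (g₀ t) c := fun hh => absurd hh.2 (not_lt.mpr hcs)
        rw [indicator_of_mem e1, indicator_of_notMem e2]; ring
      · rw [indicator_of_notMem (fun hmem => hgt (hif.mpr hmem))]
        have e1 : s ∉ Ico c (g₀ t) := fun hh => hgt (htg ▸ hh.2)
        have e2 : s ∉ Ico (g₀ t) c := fun hh => absurd hh.2 (not_lt.mpr hcs)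
        rw [indicator_of_notMem e1, indicator_of_notMem e2]; ring
    rw [integral_congr_ae hae, integral_indicator measurableSet_Ioo]
    have hres : μ.restrict (Ioo γ 1) = volume.restrict (Ioo γ 1) := by
      rw [hμdef, Measure.restrict_restrict measurableSet_Ioo,
        inter_eq_left.mpr (Ioo_subset_Ioo hγmem.1 le_rfl)]
    rw [hres]
    exact hH γ hγmem
  · -- lower case : K t s = -(indicator {g t ≤ s} δ)
    set L : Set ℝ := {t | t ∈ Ioo (0:ℝ) 1 ∧ g t ≤ s} with hLdef
    set β : ℝ := if hL : L.Nonempty then sSup L else 0 with hβdef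
    have hbdd : BddAbove L := ⟨1, fun t ht => ht.1.2.le⟩
    have hβmem : β ∈ Icc (0:ℝ) 1 := by
      by_cases hL : L.Nonempty
      · rw [hβdef, dif_pos hL]
        obtain ⟨t₀, ht₀⟩ := hL
        exact ⟨ht₀.1.1.le.trans (le_csSup hbdd ht₀),
          csSup_le ⟨t₀, ht₀⟩ (fun t ht => ht.1.2.le)⟩
      · rw [hβdef, dif_neg hL]; exact ⟨le_rfl, zero_le_one⟩
    have hiff : ∀ t ∈ Ioo (0:ℝ) 1, t ≠ β → (g t ≤ s ↔ t ∈ Ioo 0 β) := by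
      intro t ht htβ
      constructor
      · intro hgt
        have htL : t ∈ L := ⟨ht, hgt⟩
        have hLne : L.Nonempty := ⟨t, htL⟩
        rw [hβdef, dif_pos hLne] at htβ ⊢
        exact ⟨ht.1, lt_of_le_of_ne (le_csSup hbdd htL) htβ⟩
      · intro htI
        by_cases hL : L.Nonempty
        · rw [hβdef, dif_pos hL] at htI
          obtain ⟨t₀, ht₀L, ht₀t⟩ := exists_lt_of_lt_csSup hL htI.2
          exact le_trans (hgmono ht ht₀L.1 ht₀t.le) ht₀L.2
        · rw [hβdef, dif_neg hL] at htI
          exact absurd (htI.1.trans htI.2) (lt_irrefl _)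
    have hae : (fun t => K t s) =ᵐ[μ] fun t => -((Ioo (0:ℝ) β).indicator δ t) := by
      have h1 : ∀ᵐ t ∂μ, t ∈ Ioo (0:ℝ) 1 := ae_restrict_mem measurableSet_Ioo
      have h2 : ∀ᵐ t ∂μ, t ≠ β := by
        rw [ae_iff]
        have he : {t : ℝ | ¬ t ≠ β} = {β} := by ext t; simp
        rw [he, hμdef, Measure.restrict_apply' measurableSet_Ioo]
        exact measure_mono_null inter_subset_left Real.volume_singleton
      filter_upwards [h1, h2, hgg₀] with t ht htβ htg
      have hif := hiff t ht htβ
      simp only [hKdef]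
      by_cases hgt : g t ≤ s
      · rw [indicator_of_mem (hif.mp hgt)]
        have e1 : s ∉ Ico c (g₀ t) := fun hh => absurd hh.1 (not_le.mpr hsc)
        have e2 : s ∈ Ico (g₀ t) c := ⟨htg ▸ hgt, hsc⟩
        rw [indicator_of_notMem e1, indicator_of_mem e2]; ring
      · rw [indicator_of_notMem (fun hmem => hgt (hif.mpr hmem))]
        have e1 : s ∉ Ico c (g₀ t) := fun hh => absurd hh.1 (not_le.mpr hsc)
        have e2 : s ∉ Ico (g₀ t) c := fun hh => hgt (htg ▸ hh.1)
        rw [indicator_of_notMem e1, indicator_of_notMem e2]; ring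
    rw [integral_congr_ae hae, integral_neg, integral_indicator measurableSet_Ioo]
    have hres : μ.restrict (Ioo (0:ℝ) β) = volume.restrict (Ioo (0:ℝ) β) := by
      rw [hμdef, Measure.restrict_restrict measurableSet_Ioo,
        inter_eq_left.mpr (Ioo_subset_Ioo le_rfl hβmem.2)]
    rw [hres]
    -- split ∫_{(0,1)} = ∫_{(0,β)} + ∫_{(β,1)}
    have hd0 : IntegrableOn δ (Ioo (0:ℝ) 1) volume := hiδ
    have hd1 : IntegrableOn δ (Ioo (0:ℝ) β) volume :=
      hd0.mono_set (Ioo_subset_Ioo le_rfl hβmem.2)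
    have hd2 : IntegrableOn δ (Ioo β 1) volume :=
      hd0.mono_set (Ioo_subset_Ioo hβmem.1 le_rfl)
    have hdisj : Disjoint (Ioo (0:ℝ) β) (Ioo β 1) := by
      apply Set.disjoint_left.mpr
      rintro t ⟨_, h1⟩ ⟨h2, _⟩
      exact absurd (h1.trans h2) (lt_irrefl _)
    have haeU : (Ioo (0:ℝ) β ∪ Ioo β 1 : Set ℝ) =ᵐ[volume] (Ioo (0:ℝ) 1 : Set ℝ) := by
      rw [MeasureTheory.ae_eq_set]
      constructor
      · refine measure_mono_null ?_ (measure_empty (μ := volume))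
        rintro t ⟨htu, hto⟩
        rcases htu with h | h
        · exact hto ⟨h.1, h.2.trans_le hβmem.2⟩
        · exact hto ⟨hβmem.1.trans_lt h.1, h.2⟩
      · refine measure_mono_null ?_ (Real.volume_singleton (a := β))
        rintro t ⟨hto, htu⟩
        rcases lt_trichotomy t β with h | h | h
        · exact absurd (Or.inl ⟨hto.1, h⟩) htu
        · exact mem_singleton_iff.mpr h
        · exact absurd (Or.inr ⟨h, hto.2⟩) htu
    have hsplit2 : (∫ t in Ioo (0:ℝ) β, δ t) + (∫ t in Ioo β 1, δ t) = ∫ t in Ioo (0:ℝ) 1, δ t := by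
      rw [← setIntegral_union hdisj measurableSet_Ioo hd1 hd2]
      exact setIntegral_congr_set haeU
    have h3 : (0:ℝ) ≤ ∫ t in Ioo β 1, δ t := hH β hβmem
    have h4 : (∫ t in Ioo (0:ℝ) 1, δ t) = 0 := hδint0
    linarith

end
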